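/- (Transversality.) Assume (H0) and d₁, d₂, l > 0, let k be a natural number at which hypothesis (H3) holds: B_k − C_k > 0, −A_k² + 2·B_k + b₁₁² > 0 and (A_k² − 2·B_k − b₁₁²)² > 4·(B_k² − C_k²), and let j be a natural number. Suppose λ : ℝ → ℂ is differentiable at τ₀ := τ_k^{j+} (resp. τ₀ := τ_k^{j−}), satisfies λ(τ₀) = i·ω_k⁺ (resp. λ(τ₀) = i·ω_k⁻), and satisfies λ(τ)² + A_k·λ(τ) + B_k + (−b₁₁·λ(τ) + C_k)·exp(−λ(τ)·τ) = 0 for all τ in some open neighborhood of τ₀. Then the derivative λ′(τ₀) has strictly positive real part (resp. strictly negative real part). -/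

import Mathlib

open Real

/-- Δ = M² − 4·K·(a·m + c·p)·(a·r₂ + c·d − c·r₀) with M = a·m + c·p + K·(a·r₂ + c·d). -/
noncomputable def Delta (r₀ r₂ K d a p c m : ℝ) : ℝ :=
  (a*m + c*p + K*(a*r₂ + c*d))^2 - 4*K*(a*m + c*p)*(a*r₂ + c*d - c*r₀)

/-- The positive equilibrium predator density v⋆. -/
noncomputable def vstar (r₀ r₂ K d a p c m : ℝ) : ℝ :=
  (-(a*m + c*p + K*(a*r₂ + c*d)) + Real.sqrt (Delta r₀ r₂ K d a p c m)) / (2*K*(a*m + c*p))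

/-- The positive equilibrium prey density u⋆ = (r₂ + m·v⋆)/c. -/
noncomputable def ustar (r₀ r₂ K d a p c m : ℝ) : ℝ := (r₂ + m * vstar r₀ r₂ K d a p c m) / c

/-- Linearization coefficient a₁₂. -/
noncomputable def a12 (r₀ r₂ K d a p c m : ℝ) : ℝ :=
  -K*r₀*ustar r₀ r₂ K d a p c m / (1 + K*vstar r₀ r₂ K d a p c m)^2 - p*ustar r₀ r₂ K d a p c m

/-- Linearization coefficient a₂₁. -/
noncomputable def a21 (r₀ r₂ K d a p c m : ℝ) : ℝ := c * vstar r₀ r₂ K d a p c m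

/-- Linearization coefficient a₂₂. -/
noncomputable def a22 (r₀ r₂ K d a p c m : ℝ) : ℝ := -m * vstar r₀ r₂ K d a p c m

/-- Linearization coefficient b₁₁. -/
noncomputable def b11 (r₀ r₂ K d a p c m : ℝ) : ℝ := -a * ustar r₀ r₂ K d a p c m

/-- A_k = (d₁ + d₂)·k²/l² − a₂₂. -/
noncomputable def Ak (r₀ r₂ K d a p c m d₁ d₂ l : ℝ) (k : ℕ) : ℝ :=
  (d₁ + d₂)*(k:ℝ)^2/l^2 - a22 r₀ r₂ K d a p c m

/-- B_k = d₁·d₂·k⁴/l⁴ − a₂₂·d₁·k²/l² − a₁₂·a₂₁. -/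
noncomputable def Bk (r₀ r₂ K d a p c m d₁ d₂ l : ℝ) (k : ℕ) : ℝ :=
  d₁*d₂*(k:ℝ)^4/l^4 - a22 r₀ r₂ K d a p c m * d₁*(k:ℝ)^2/l^2 - a12 r₀ r₂ K d a p c m * a21 r₀ r₂ K d a p c m

/-- C_k = −b₁₁·d₂·k²/l² + a₂₂·b₁₁. -/
noncomputable def Ck (r₀ r₂ K d a p c m d₁ d₂ l : ℝ) (k : ℕ) : ℝ :=
  -(b11 r₀ r₂ K d a p c m)*d₂*(k:ℝ)^2/l^2 + a22 r₀ r₂ K d a p c m * b11 r₀ r₂ K d a p c m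

/-- The characteristic equation at mode k with delay τ:
λ² + A_k·λ + B_k + (−b₁₁·λ + C_k)·exp(−λτ) = 0. -/
def charEq (r₀ r₂ K d a p c m d₁ d₂ l : ℝ) (k : ℕ) (τ : ℝ) (z : ℂ) : Prop :=
  z^2 + (Ak r₀ r₂ K d a p c m d₁ d₂ l k : ℂ)*z + (Bk r₀ r₂ K d a p c m d₁ d₂ l k : ℂ)
    + (-(b11 r₀ r₂ K d a p c m : ℂ)*z + (Ck r₀ r₂ K d a p c m d₁ d₂ l k : ℂ)) * Complex.exp (-z*(τ:ℂ)) = 0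

/-- Ĉ_k(ω) = (d₁·b₁₁·ω²·k²/l² − B_k·C_k)/(b₁₁²·ω² + C_k²). -/
noncomputable def Chat (r₀ r₂ K d a p c m d₁ d₂ l : ℝ) (k : ℕ) (ω : ℝ) : ℝ :=
  (d₁ * b11 r₀ r₂ K d a p c m * ω^2 * (k:ℝ)^2/l^2 - Bk r₀ r₂ K d a p c m d₁ d₂ l k * Ck r₀ r₂ K d a p c m d₁ d₂ l k) /
    ((b11 r₀ r₂ K d a p c m)^2*ω^2 + (Ck r₀ r₂ K d a p c m d₁ d₂ l k)^2)

/-- S_k(ω) = (A_k·C_k·ω + B_k·b₁₁·ω − b₁₁·ω³)/(b₁₁²·ω² + C_k²). -/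
noncomputable def Sk (r₀ r₂ K d a p c m d₁ d₂ l : ℝ) (k : ℕ) (ω : ℝ) : ℝ :=
  (Ak r₀ r₂ K d a p c m d₁ d₂ l k * Ck r₀ r₂ K d a p c m d₁ d₂ l k * ω + Bk r₀ r₂ K d a p c m d₁ d₂ l k * b11 r₀ r₂ K d a p c m * ω - b11 r₀ r₂ K d a p c m * ω^3) /
    ((b11 r₀ r₂ K d a p c m)^2*ω^2 + (Ck r₀ r₂ K d a p c m d₁ d₂ l k)^2)

/-- ω_k⁺. -/
noncomputable def omegaP (r₀ r₂ K d a p c m d₁ d₂ l : ℝ) (k : ℕ) : ℝ :=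
  Real.sqrt ((-(Ak r₀ r₂ K d a p c m d₁ d₂ l k)^2 + 2*Bk r₀ r₂ K d a p c m d₁ d₂ l k + (b11 r₀ r₂ K d a p c m)^2
    + Real.sqrt (((Ak r₀ r₂ K d a p c m d₁ d₂ l k)^2 - 2*Bk r₀ r₂ K d a p c m d₁ d₂ l k - (b11 r₀ r₂ K d a p c m)^2)^2
      - 4*((Bk r₀ r₂ K d a p c m d₁ d₂ l k)^2 - (Ck r₀ r₂ K d a p c m d₁ d₂ l k)^2))) / 2)

/-- ω_k⁻. -/
noncomputable def omegaM (r₀ r₂ K d a p c m d₁ d₂ l : ℝ) (k : ℕ) : ℝ :=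
  Real.sqrt ((-(Ak r₀ r₂ K d a p c m d₁ d₂ l k)^2 + 2*Bk r₀ r₂ K d a p c m d₁ d₂ l k + (b11 r₀ r₂ K d a p c m)^2
    - Real.sqrt (((Ak r₀ r₂ K d a p c m d₁ d₂ l k)^2 - 2*Bk r₀ r₂ K d a p c m d₁ d₂ l k - (b11 r₀ r₂ K d a p c m)^2)^2
      - 4*((Bk r₀ r₂ K d a p c m d₁ d₂ l k)^2 - (Ck r₀ r₂ K d a p c m d₁ d₂ l k)^2))) / 2)

/-- τ_k^(j+) = (π − arcsin S_k(ω_k⁺) + 2jπ)/ω_k⁺. -/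
noncomputable def tauP (r₀ r₂ K d a p c m d₁ d₂ l : ℝ) (k j : ℕ) : ℝ :=
  (Real.pi - Real.arcsin (Sk r₀ r₂ K d a p c m d₁ d₂ l k (omegaP r₀ r₂ K d a p c m d₁ d₂ l k)) + 2*(j:ℝ)*Real.pi) / omegaP r₀ r₂ K d a p c m d₁ d₂ l k

/-- τ_k^(j−) = (π − arcsin S_k(ω_k⁻) + 2jπ)/ω_k⁻. -/
noncomputable def tauM (r₀ r₂ K d a p c m d₁ d₂ l : ℝ) (k j : ℕ) : ℝ :=
  (Real.pi - Real.arcsin (Sk r₀ r₂ K d a p c m d₁ d₂ l k (omegaM r₀ r₂ K d a p c m d₁ d₂ l k)) + 2*(j:ℝ)*Real.pi) / omegaM r₀ r₂ K d a p c m d₁ d₂ l k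

/-- Hypothesis (H3) at mode k. -/
def H3 (r₀ r₂ K d a p c m d₁ d₂ l : ℝ) (k : ℕ) : Prop :=
  Bk r₀ r₂ K d a p c m d₁ d₂ l k - Ck r₀ r₂ K d a p c m d₁ d₂ l k > 0 ∧ -(Ak r₀ r₂ K d a p c m d₁ d₂ l k)^2 + 2*Bk r₀ r₂ K d a p c m d₁ d₂ l k + (b11 r₀ r₂ K d a p c m)^2 > 0 ∧
    ((Ak r₀ r₂ K d a p c m d₁ d₂ l k)^2 - 2*Bk r₀ r₂ K d a p c m d₁ d₂ l k - (b11 r₀ r₂ K d a p c m)^2)^2 > 4*((Bk r₀ r₂ K d a p c m d₁ d₂ l k)^2 - (Ck r₀ r₂ K d a p c m d₁ d₂ l k)^2)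

lemma key_transversal (A B C b τ₀ ω : ℝ) (hA : 0 < A) (hb : b ≠ 0) (hω : 0 < ω)
    (hq : (ω^2 - B)^2 + A^2*ω^2 = C^2 + b^2*ω^2)
    (z : ℝ → ℂ) (z' : ℂ) (hz : HasDerivAt z z' τ₀)
    (hv : z τ₀ = Complex.I * (ω:ℂ))
    (hev : ∀ᶠ τ in nhds τ₀, (z τ)^2 + (A:ℂ)*(z τ) + (B:ℂ)
      + (-(b:ℂ)*(z τ) + (C:ℂ)) * Complex.exp (-(z τ)*(τ:ℂ)) = 0) :
    ∃ r : ℝ, 0 < r ∧ z'.re = (2*ω^2 + A^2 - 2*B - b^2) * r := by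
  -- derivative of τ ↦ (τ:ℂ)
  have hτc : HasDerivAt (fun τ : ℝ => (τ : ℂ)) 1 τ₀ := by
    exact
      Complex.ofRealCLM.hasDerivAt (x := τ₀)
  have hinner : HasDerivAt (fun τ : ℝ => -(z τ) * (τ:ℂ)) (-z' * (τ₀:ℂ) + -(z τ₀) * 1) τ₀ :=
    hz.neg.mul hτc
  have hexp := hinner.cexp
  have hfac : HasDerivAt (fun τ => -(b:ℂ) * z τ + (C:ℂ)) (-(b:ℂ) * z') τ₀ :=
    (hz.const_mul (-(b:ℂ))).add_const (C:ℂ)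
  have hsq : HasDerivAt (fun τ => (z τ)^2) (z' * z τ₀ + z τ₀ * z') τ₀ := by
    simpa only [pow_two, Pi.mul_def] using hz.mul hz
  have hpoly : HasDerivAt (fun τ => (z τ)^2 + (A:ℂ)*(z τ) + (B:ℂ))
      (z' * z τ₀ + z τ₀ * z' + (A:ℂ) * z') τ₀ := (hsq.add (hz.const_mul (A:ℂ))).add_const (B:ℂ)
  have hg := hpoly.add (hfac.mul hexp)
  have hG0 : HasDerivAt (fun τ => (z τ)^2 + (A:ℂ)*(z τ) + (B:ℂ)
      + (-(b:ℂ)*(z τ) + (C:ℂ)) * Complex.exp (-(z τ)*(τ:ℂ))) 0 τ₀ :=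
    (hasDerivAt_const τ₀ (0:ℂ)).congr_of_eventuallyEq (hev.mono fun τ h => h)
  have hzero := hg.unique hG0
  have eq0 := hev.self_of_nhds
  rw [hv] at hzero eq0
  set E : ℂ := Complex.exp (-(Complex.I * (ω:ℂ)) * (τ₀:ℂ)) with hEdef
  set u : ℂ := (C:ℂ) - (b:ℂ)*Complex.I*(ω:ℂ) with hudef
  set W : ℂ := (ω:ℂ)^2 - (B:ℂ) - (A:ℂ)*Complex.I*(ω:ℂ) with hWdef
  have hu : u * E = W := by
    linear_combination eq0 - (ω:ℂ)^2 * Complex.I_sq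
  set P : ℂ := (2*Complex.I*(ω:ℂ) + (A:ℂ) - (τ₀:ℂ)*W)*u - (b:ℂ)*W with hPdef
  have hP : z' * P = Complex.I*(ω:ℂ)*W*u := by
    linear_combination u * hzero + ((b:ℂ)*z' + (τ₀:ℂ)*z'*u + Complex.I*(ω:ℂ)*u) * hu
  have hWne : W ≠ 0 := by
    intro h
    have h' := congrArg Complex.im h
    simp [hWdef, pow_two, Complex.mul_im] at h'
    rcases h' with h' | h'
    · exact hA.ne' h'
    · exact hω.ne' h'
  have hune : u ≠ 0 := by
    intro h
    have h' := congrArg Complex.im h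
    simp [hudef, Complex.mul_im] at h'
    rcases h' with h' | h'
    · exact hb h'
    · exact hω.ne' h'
  have hnumne : Complex.I*(ω:ℂ)*W*u ≠ 0 := by
    apply mul_ne_zero (mul_ne_zero (mul_ne_zero Complex.I_ne_zero
      (Complex.ofReal_ne_zero.mpr hω.ne')) hWne) hune
  have hPne : P ≠ 0 := by
    intro h
    rw [h, mul_zero] at hP
    exact hnumne hP.symm
  have hz' : z' = Complex.I*(ω:ℂ)*W*u / P := (eq_div_iff hPne).mpr hP
  have hre : z'.re = ((Complex.I*(ω:ℂ)*W*u).re * P.re + (Complex.I*(ω:ℂ)*W*u).im * P.im)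
      / (P.re^2 + P.im^2) := by
    rw [hz', Complex.div_re, Complex.normSq_apply]; ring
  have hnre : (Complex.I*(ω:ℂ)*W*u).re = ω^2*(b*(ω^2-B) + A*C) := by
    simp [hWdef, hudef, pow_two, Complex.mul_re, Complex.mul_im]
    ring
  have hnim : (Complex.I*(ω:ℂ)*W*u).im = ω*((ω^2-B)*C - A*b*ω^2) := by
    simp [hWdef, hudef, pow_two, Complex.mul_re, Complex.mul_im]
    ring
  have hPre : P.re = (A - τ₀*(ω^2-B))*C + (2+τ₀*A)*b*ω^2 - b*(ω^2-B) := by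
    simp [hPdef, hWdef, hudef, pow_two, Complex.mul_re, Complex.mul_im]
    ring
  have hPim : P.im = -(A - τ₀*(ω^2-B))*b*ω + (2*ω+τ₀*A*ω)*C + A*b*ω := by
    simp [hPdef, hWdef, hudef, pow_two, Complex.mul_re, Complex.mul_im]
    ring
  have hS : (Complex.I*(ω:ℂ)*W*u).re * P.re + (Complex.I*(ω:ℂ)*W*u).im * P.im
      = (2*ω^2+A^2-2*B-b^2)*(ω^2*(C^2+b^2*ω^2)) := by
    rw [hnre, hnim, hPre, hPim]
    linear_combination (-(b^2*ω^2))*hq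
  have hnsq : 0 < P.re^2 + P.im^2 := by
    have h1 : (0:ℝ) < Complex.normSq P := Complex.normSq_pos.mpr hPne
    rw [Complex.normSq_apply] at h1
    nlinarith [h1]
  have hb2 : 0 < b^2 := lt_of_le_of_ne (sq_nonneg b) (Ne.symm (pow_ne_zero 2 hb))
  refine ⟨ω^2*(C^2+b^2*ω^2)/(P.re^2 + P.im^2), ?_, ?_⟩
  · apply div_pos _ hnsq
    have : 0 < b^2*ω^2 := mul_pos hb2 (by positivity)
    nlinarith [sq_nonneg C]
  · rw [hre, hS]
    ring


lemma plus_facts (A B C b ω : ℝ) (h32 : -A^2+2*B+b^2 > 0)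
    (h33 : (A^2-2*B-b^2)^2 > 4*(B^2-C^2))
    (hω : ω = Real.sqrt ((-A^2+2*B+b^2 + Real.sqrt ((A^2-2*B-b^2)^2 - 4*(B^2-C^2)))/2)) :
    0 < ω ∧ (ω^2-B)^2 + A^2*ω^2 = C^2+b^2*ω^2 ∧ 0 < 2*ω^2+A^2-2*B-b^2 := by
  have hD : 0 < (A^2-2*B-b^2)^2 - 4*(B^2-C^2) := by linarith
  have hsn := Real.sqrt_nonneg ((A^2-2*B-b^2)^2 - 4*(B^2-C^2))
  have hw : 0 < (-A^2+2*B+b^2 + Real.sqrt ((A^2-2*B-b^2)^2 - 4*(B^2-C^2)))/2 := by linarith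
  have hω0 : 0 < ω := hω ▸ Real.sqrt_pos.mpr hw
  have hsq : ω^2 = (-A^2+2*B+b^2 + Real.sqrt ((A^2-2*B-b^2)^2 - 4*(B^2-C^2)))/2 := by
    rw [hω]; exact Real.sq_sqrt hw.le
  have hDD : Real.sqrt ((A^2-2*B-b^2)^2 - 4*(B^2-C^2)) ^2 = (A^2-2*B-b^2)^2 - 4*(B^2-C^2) :=
    Real.sq_sqrt hD.le
  refine ⟨hω0, ?_, ?_⟩
  · linear_combination (ω^2 + (-A^2+2*B+b^2 + Real.sqrt ((A^2-2*B-b^2)^2 - 4*(B^2-C^2)))/2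
      + (A^2-2*B-b^2)) * hsq + (1/4)*hDD
  · have h : 2*ω^2+A^2-2*B-b^2 = Real.sqrt ((A^2-2*B-b^2)^2 - 4*(B^2-C^2)) := by
      linear_combination 2*hsq
    rw [h]; exact Real.sqrt_pos.mpr hD

lemma minus_facts (A B C b ω : ℝ) (hC : 0 < C) (h31 : B - C > 0) (h32 : -A^2+2*B+b^2 > 0)
    (h33 : (A^2-2*B-b^2)^2 > 4*(B^2-C^2))
    (hω : ω = Real.sqrt ((-A^2+2*B+b^2 - Real.sqrt ((A^2-2*B-b^2)^2 - 4*(B^2-C^2)))/2)) :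
    0 < ω ∧ (ω^2-B)^2 + A^2*ω^2 = C^2+b^2*ω^2 ∧ 2*ω^2+A^2-2*B-b^2 < 0 := by
  have hD : 0 < (A^2-2*B-b^2)^2 - 4*(B^2-C^2) := by linarith
  have hBC : 0 < B^2 - C^2 := by nlinarith
  have hlt : Real.sqrt ((A^2-2*B-b^2)^2 - 4*(B^2-C^2)) < -A^2+2*B+b^2 := by
    rw [Real.sqrt_lt' h32]
    nlinarith
  have hw : 0 < (-A^2+2*B+b^2 - Real.sqrt ((A^2-2*B-b^2)^2 - 4*(B^2-C^2)))/2 := by linarith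
  have hω0 : 0 < ω := hω ▸ Real.sqrt_pos.mpr hw
  have hsq : ω^2 = (-A^2+2*B+b^2 - Real.sqrt ((A^2-2*B-b^2)^2 - 4*(B^2-C^2)))/2 := by
    rw [hω]; exact Real.sq_sqrt hw.le
  have hDD : Real.sqrt ((A^2-2*B-b^2)^2 - 4*(B^2-C^2)) ^2 = (A^2-2*B-b^2)^2 - 4*(B^2-C^2) :=
    Real.sq_sqrt hD.le
  refine ⟨hω0, ?_, ?_⟩
  · linear_combination (ω^2 + (-A^2+2*B+b^2 - Real.sqrt ((A^2-2*B-b^2)^2 - 4*(B^2-C^2)))/2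
      + (A^2-2*B-b^2)) * hsq + (1/4)*hDD
  · have h : 2*ω^2+A^2-2*B-b^2 = -Real.sqrt ((A^2-2*B-b^2)^2 - 4*(B^2-C^2)) := by
      linear_combination 2*hsq
    rw [h]
    simpa using Real.sqrt_pos.mpr hD

lemma vstar_pos (r₀ r₂ K d a p c m : ℝ) (hr₀ : 0 < r₀) (hr₂ : 0 < r₂) (hK : 0 < K) (hd : 0 < d)
    (ha : 0 < a) (hp : 0 < p) (hc : 0 < c) (hm : 0 < m) (hH0 : a*r₂ + c*d - c*r₀ < 0) :
    0 < vstar r₀ r₂ K d a p c m := by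
  have hq0 : 0 < a*m+c*p := by positivity
  have hM : 0 < a*m+c*p+K*(a*r₂+c*d) := by positivity
  have hΔ : (a*m+c*p+K*(a*r₂+c*d))^2 < Delta r₀ r₂ K d a p c m := by
    unfold Delta
    nlinarith [mul_neg_of_pos_of_neg (mul_pos hK hq0) hH0]
  have hsd : a*m+c*p+K*(a*r₂+c*d) < Real.sqrt (Delta r₀ r₂ K d a p c m) :=
    (Real.lt_sqrt hM.le).mpr hΔ
  unfold vstar
  apply div_pos (by linarith) (by positivity)

theorem stmt17 (r₀ r₂ K d a p c m d₁ d₂ l : ℝ) (hr₀ : 0 < r₀) (hr₂ : 0 < r₂) (hK : 0 < K) (hd : 0 < d) (ha : 0 < a) (hp : 0 < p) (hc : 0 < c) (hm : 0 < m)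
    (hd₁ : 0 < d₁) (hd₂ : 0 < d₂) (hl : 0 < l)
    (hH0 : a*r₂ + c*d - c*r₀ < 0) (k j : ℕ) (hH3 : H3 r₀ r₂ K d a p c m d₁ d₂ l k) :
    (∀ (z : ℝ → ℂ) (z' : ℂ),
      HasDerivAt z z' (tauP r₀ r₂ K d a p c m d₁ d₂ l k j) →
      z (tauP r₀ r₂ K d a p c m d₁ d₂ l k j) = Complex.I * (omegaP r₀ r₂ K d a p c m d₁ d₂ l k : ℂ) →
      (∀ᶠ τ in nhds (tauP r₀ r₂ K d a p c m d₁ d₂ l k j), charEq r₀ r₂ K d a p c m d₁ d₂ l k τ (z τ)) →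
      0 < z'.re) ∧
    (∀ (z : ℝ → ℂ) (z' : ℂ),
      HasDerivAt z z' (tauM r₀ r₂ K d a p c m d₁ d₂ l k j) →
      z (tauM r₀ r₂ K d a p c m d₁ d₂ l k j) = Complex.I * (omegaM r₀ r₂ K d a p c m d₁ d₂ l k : ℂ) →
      (∀ᶠ τ in nhds (tauM r₀ r₂ K d a p c m d₁ d₂ l k j), charEq r₀ r₂ K d a p c m d₁ d₂ l k τ (z τ)) →
      z'.re < 0) := by
  obtain ⟨h31, h32, h33⟩ := hH3
  have hv : 0 < vstar r₀ r₂ K d a p c m := vstar_pos r₀ r₂ K d a p c m hr₀ hr₂ hK hd ha hp hc hm hH0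
  have hu : 0 < ustar r₀ r₂ K d a p c m := by
    unfold ustar; apply div_pos (by nlinarith) hc
  have hb : b11 r₀ r₂ K d a p c m < 0 := by unfold b11; nlinarith
  have ha22 : a22 r₀ r₂ K d a p c m < 0 := by unfold a22; nlinarith
  have hA : 0 < Ak r₀ r₂ K d a p c m d₁ d₂ l k := by
    unfold Ak
    have h1 : 0 ≤ (d₁+d₂)*(k:ℝ)^2/l^2 := by positivity
    linarith
  have hC : 0 < Ck r₀ r₂ K d a p c m d₁ d₂ l k := by
    unfold Ck
    have h1 : 0 ≤ -(b11 r₀ r₂ K d a p c m)*d₂*(k:ℝ)^2/l^2 := by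
      apply div_nonneg _ (by positivity)
      nlinarith [mul_nonneg (mul_nonneg (neg_nonneg.mpr hb.le) hd₂.le) (sq_nonneg (k:ℝ))]
    nlinarith [mul_pos_of_neg_of_neg ha22 hb]
  constructor
  · intro z z' hz hval hev
    obtain ⟨hω0, hq, hsgn⟩ := plus_facts (Ak r₀ r₂ K d a p c m d₁ d₂ l k) (Bk r₀ r₂ K d a p c m d₁ d₂ l k) (Ck r₀ r₂ K d a p c m d₁ d₂ l k)
      (b11 r₀ r₂ K d a p c m) (omegaP r₀ r₂ K d a p c m d₁ d₂ l k) h32 h33 rfl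
    obtain ⟨r, hr, hre⟩ := key_transversal (Ak r₀ r₂ K d a p c m d₁ d₂ l k) (Bk r₀ r₂ K d a p c m d₁ d₂ l k) (Ck r₀ r₂ K d a p c m d₁ d₂ l k)
      (b11 r₀ r₂ K d a p c m) (tauP r₀ r₂ K d a p c m d₁ d₂ l k j) (omegaP r₀ r₂ K d a p c m d₁ d₂ l k) hA hb.ne hω0 hq z z' hz hval
      (hev.mono fun τ h => h)
    rw [hre]; exact mul_pos hsgn hr
  · intro z z' hz hval hev
    obtain ⟨hω0, hq, hsgn⟩ := minus_facts (Ak r₀ r₂ K d a p c m d₁ d₂ l k) (Bk r₀ r₂ K d a p c m d₁ d₂ l k) (Ck r₀ r₂ K d a p c m d₁ d₂ l k)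
      (b11 r₀ r₂ K d a p c m) (omegaM r₀ r₂ K d a p c m d₁ d₂ l k) hC h31 h32 h33 rfl
    obtain ⟨r, hr, hre⟩ := key_transversal (Ak r₀ r₂ K d a p c m d₁ d₂ l k) (Bk r₀ r₂ K d a p c m d₁ d₂ l k) (Ck r₀ r₂ K d a p c m d₁ d₂ l k)
      (b11 r₀ r₂ K d a p c m) (tauM r₀ r₂ K d a p c m d₁ d₂ l k j) (omegaM r₀ r₂ K d a p c m d₁ d₂ l k) hA hb.ne hω0 hq z z' hz hval
      (hev.mono fun τ h => h)
    rw [hre]; exact mul_neg_of_neg_of_pos hsgn hr
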